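/- Let F : ℝ^d → (nonempty compact convex sets) be L-Lipschitz in the Hausdorff metric (∞-norm). Let h, ρ > 0, α(h,ρ) = (1+Lh)ρ/2, and define Φ^α_{h,ρ}(x) = B_α(x + hF(x)) ∩ Δ_ρ. If M ⊂ Δ_ρ is nonempty and chain-connected with step ρ, and α ≥ α(h,ρ), then Φ^α_{h,ρ}(M) := ∪_{x∈M} Φ^α_{h,ρ}(x) is nonempty and chain-connected with step ρ. -/

import Mathlib

/-- The grid Δ_ρ = ρℤ^d. -/
def grid (d : ℕ) (ρ : ℝ) : Set (Fin d → ℝ) := {x | ∀ i, ∃ k : ℤ, x i = ρ * k}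

/-- Chain-connectedness with step ρ. -/
def ChainConnected (d : ℕ) (ρ : ℝ) (M : Set (Fin d → ℝ)) : Prop :=
  ∀ x ∈ M, ∀ z ∈ M, ∃ (n : ℕ) (y : ℕ → (Fin d → ℝ)), y 0 = x ∧ y n = z ∧
    (∀ k ≤ n, y k ∈ M) ∧ ∀ k < n, dist (y (k+1)) (y k) = ρ

/-- Discretized Euler step: Φ^α_{h,ρ}(x) = B_α(x + hF(x)) ∩ Δ_ρ, extended to a set M. -/
def eulerImage (d : ℕ) (F : (Fin d → ℝ) → Set (Fin d → ℝ)) (h ρ α : ℝ)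
    (M : Set (Fin d → ℝ)) : Set (Fin d → ℝ) :=
  ⋃ x ∈ M, {y | ∃ w ∈ F x, dist y (x + h • w) ≤ α} ∩ grid d ρ


/-- A chain in S from x to z. -/
def GChain (d : ℕ) (ρ : ℝ) (S : Set (Fin d → ℝ)) (x z : Fin d → ℝ) : Prop :=
  ∃ (n : ℕ) (y : ℕ → (Fin d → ℝ)), y 0 = x ∧ y n = z ∧
    (∀ k ≤ n, y k ∈ S) ∧ ∀ k < n, dist (y (k+1)) (y k) = ρ

theorem gchain_refl {d ρ S} {x : Fin d → ℝ} (hx : x ∈ S) : GChain d ρ S x x :=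
  ⟨0, fun _ => x, rfl, rfl, fun _ _ => hx, fun k hk => absurd hk (Nat.not_lt_zero k)⟩

theorem gchain_mono {d ρ} {S T : Set (Fin d → ℝ)} (hST : S ⊆ T) {x z}
    (h : GChain d ρ S x z) : GChain d ρ T x z := by
  obtain ⟨n, y, h0, hn, hm, hd⟩ := h
  exact ⟨n, y, h0, hn, fun k hk => hST (hm k hk), hd⟩

theorem gchain_single {d ρ S} {x z : Fin d → ℝ} (hx : x ∈ S) (hz : z ∈ S)
    (hd : dist z x = ρ) : GChain d ρ S x z := by
  refine ⟨1, fun k => if k = 0 then x else z, by simp, by simp, ?_, ?_⟩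
  · intro k _; by_cases h : k = 0 <;> simp [h, hx, hz]
  · intro k hk
    interval_cases k
    simpa using hd

theorem gchain_trans {d ρ S} {x y z : Fin d → ℝ}
    (h1 : GChain d ρ S x y) (h2 : GChain d ρ S y z) : GChain d ρ S x z := by
  obtain ⟨n, f, hf0, hfn, hfm, hfd⟩ := h1
  obtain ⟨m, g, hg0, hgm, hgm', hgd⟩ := h2
  refine ⟨n + m, fun k => if k ≤ n then f k else g (k - n), ?_, ?_, ?_, ?_⟩
  · simp [hf0]
  · by_cases hm0 : m = 0
    · subst hm0; simp [hfn, ← hg0, hgm]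
    · have : ¬ (n + m ≤ n) := by omega
      simp only [this, if_false]
      simpa using hgm
  · intro k hk
    by_cases h : k ≤ n
    · simp only [h, if_true]; exact hfm k h
    · simp only [h, if_false]; exact hgm' (k - n) (by omega)
  · have key : ∀ k, n ≤ k → (if k ≤ n then f k else g (k - n)) = g (k - n) := by
      intro k hk
      by_cases h : k ≤ n
      · have : k = n := le_antisymm h hk
        subst this
        simp [hfn, ← hg0]
      · simp [h]
    intro k hk
    by_cases h : k + 1 ≤ n
    · simp only [h, if_true, show k ≤ n by omega, if_true]
      exact hfd k (by omega)
    · have hkn : n ≤ k + 1 := by omega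
      show dist (if k + 1 ≤ n then f (k+1) else g (k+1 - n)) (if k ≤ n then f k else g (k - n)) = ρ
      rw [key (k+1) hkn]
      by_cases h2 : n ≤ k
      · rw [key k h2]
        have : k + 1 - n = (k - n) + 1 := by omega
        rw [this]
        exact hgd (k - n) (by omega)
      · -- k < n and k+1 > n, so k+1 = n... impossible since h : ¬ k+1 ≤ n
        omega

theorem grid_coord_dist {d : ℕ} {ρ : ℝ} {g g' : Fin d → ℝ} (hg : g ∈ grid d ρ)
    (hg' : g' ∈ grid d ρ) (i : Fin d) : ∃ k : ℤ, dist (g i) (g' i) = |ρ| * |(k : ℝ)| := by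
  obtain ⟨a, ha⟩ := hg i
  obtain ⟨b, hb⟩ := hg' i
  refine ⟨a - b, ?_⟩
  rw [Real.dist_eq, ha, hb, ← abs_mul]
  push_cast
  ring_nf

theorem grid_dist_le {d : ℕ} {ρ : ℝ} (hρ : 0 < ρ) {g g' : Fin d → ℝ} (hg : g ∈ grid d ρ)
    (hg' : g' ∈ grid d ρ) (hle : dist g g' ≤ 3*ρ/2) : dist g g' ≤ ρ := by
  rw [dist_pi_le_iff hρ.le]
  intro i
  obtain ⟨k, hk⟩ := grid_coord_dist hg hg' i
  have h1 : dist (g i) (g' i) ≤ 3*ρ/2 := le_trans (dist_le_pi_dist g g' i) hle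
  rw [hk, abs_of_pos hρ] at h1 ⊢
  have hk1 : |(k:ℝ)| ≤ 3/2 := by
    by_contra hcon
    push_neg at hcon
    nlinarith
  have : |(k:ℝ)| ≤ 1 := by
    have : (|k| : ℤ) ≤ 1 := by
      by_contra hcon
      push_neg at hcon
      have : (2:ℝ) ≤ |(k:ℝ)| := by
        rw [← Int.cast_abs]
        exact_mod_cast hcon
      linarith
    calc |(k:ℝ)| = ((|k| : ℤ) : ℝ) := by rw [Int.cast_abs]
    _ ≤ 1 := by exact_mod_cast this
  nlinarith

theorem grid_dist_eq {d : ℕ} {ρ : ℝ} (hρ : 0 < ρ) {g g' : Fin d → ℝ} (hg : g ∈ grid d ρ)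
    (hg' : g' ∈ grid d ρ) (hne : g ≠ g') (hle : dist g g' ≤ ρ) : dist g g' = ρ := by
  refine le_antisymm hle ?_
  obtain ⟨i, hi⟩ : ∃ i, g i ≠ g' i := by
    by_contra hcon
    push_neg at hcon
    exact hne (funext hcon)
  obtain ⟨k, hk⟩ := grid_coord_dist hg hg' i
  have hk0 : k ≠ 0 := by
    intro h0
    apply hi
    have := hk
    rw [h0] at this
    simp at this
    exact this
  have h1 : (1:ℝ) ≤ |(k:ℝ)| := by
    rw [← Int.cast_abs]
    exact_mod_cast Int.one_le_abs hk0
  calc ρ = |ρ| * 1 := by rw [abs_of_pos hρ]; ring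
  _ ≤ |ρ| * |(k:ℝ)| := by
      apply mul_le_mul_of_nonneg_left h1 (abs_nonneg _)
  _ = dist (g i) (g' i) := hk.symm
  _ ≤ dist g g' := dist_le_pi_dist g g' i

/-- From a walk of grid points with steps ≤ ρ inside S ⊆ grid, build a chain. -/
theorem gchain_of_walk {d : ℕ} {ρ : ℝ} (hρ : 0 < ρ) {S : Set (Fin d → ℝ)}
    (hS : S ⊆ grid d ρ) (p : ℕ → (Fin d → ℝ)) (N : ℕ)
    (hmem : ∀ j ≤ N, p j ∈ S) (hd : ∀ j < N, dist (p (j+1)) (p j) ≤ ρ) :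
    GChain d ρ S (p 0) (p N) := by
  induction N with
  | zero => exact gchain_refl (hmem 0 le_rfl)
  | succ N ih =>
    have h1 : GChain d ρ S (p 0) (p N) :=
      ih (fun j hj => hmem j (by omega)) (fun j hj => hd j (by omega))
    refine gchain_trans h1 ?_
    by_cases he : p N = p (N+1)
    · rw [← he]; exact gchain_refl (hmem N (by omega))
    · exact gchain_single (hmem N (by omega)) (hmem (N+1) le_rfl)
        (grid_dist_eq hρ (hS (hmem (N+1) le_rfl)) (hS (hmem N (by omega)))
          (fun h => he h.symm) (hd N (by omega)))

theorem abs_le_max_of_between {x u v q : ℝ} (h1 : min u v ≤ x) (h2 : x ≤ max u v) :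
    |x - q| ≤ max |u - q| |v - q| := by
  rcases le_total u v with h|h
  · rw [min_eq_left h] at h1; rw [max_eq_right h] at h2
    rw [abs_le]
    constructor
    · linarith [neg_abs_le (u - q), le_max_left |u - q| |v - q|]
    · linarith [le_abs_self (v - q), le_max_right |u - q| |v - q|]
  · rw [min_eq_right h] at h1; rw [max_eq_left h] at h2
    rw [abs_le]
    constructor
    · linarith [neg_abs_le (v - q), le_max_right |u - q| |v - q|]
    · linarith [le_abs_self (u - q), le_max_left |u - q| |v - q|]

/-- Coordinate-wise king-move walk between two grid points, staying between them. -/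
theorem grid_walk {d : ℕ} {ρ : ℝ} (hρ : 0 < ρ) {g g' : Fin d → ℝ}
    (hg : g ∈ grid d ρ) (hg' : g' ∈ grid d ρ) :
    ∃ (N : ℕ) (p : ℕ → (Fin d → ℝ)), p 0 = g ∧ p N = g' ∧
      (∀ j, p j ∈ grid d ρ ∧ ∀ i, min (g i) (g' i) ≤ p j i ∧ p j i ≤ max (g i) (g' i)) ∧
      (∀ j, dist (p (j+1)) (p j) ≤ ρ) := by
  choose a ha using hg
  choose b hb using hg'
  set c : Fin d → ℤ := fun i => b i - a i with hc
  set n : Fin d → ℕ := fun i => (c i).natAbs with hn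
  set N : ℕ := Finset.univ.sup n with hN
  set s : ℕ → Fin d → ℤ := fun j i => a i + (c i).sign * ((min j (n i) : ℕ) : ℤ) with hs
  have hsgn : ∀ i, ((c i).sign = -1 ∧ c i < 0 ∧ (n i : ℤ) = -(c i)) ∨
      ((c i).sign = 0 ∧ c i = 0 ∧ (n i : ℤ) = 0) ∨
      ((c i).sign = 1 ∧ 0 < c i ∧ (n i : ℤ) = c i) := by
    intro i
    rcases lt_trichotomy (c i) 0 with h|h|h
    · exact Or.inl ⟨Int.sign_eq_neg_one_of_neg h, h, by simp only [hn]; omega⟩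
    · exact Or.inr (Or.inl ⟨by rw [h]; rfl, h, by simp only [hn, h]; rfl⟩)
    · exact Or.inr (Or.inr ⟨Int.sign_eq_one_of_pos h, h, by simp only [hn]; omega⟩)
  have hkey : ∀ j i, min (a i) (b i) ≤ s j i ∧ s j i ≤ max (a i) (b i) := by
    intro j i
    have hmin : ((min j (n i) : ℕ) : ℤ) ≤ (n i : ℤ) := by exact_mod_cast Nat.min_le_right j (n i)
    have hmin0 : (0:ℤ) ≤ ((min j (n i) : ℕ) : ℤ) := Int.natCast_nonneg _
    have hci : b i = a i + c i := by simp only [hc]; ring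
    have hmm : min (a i) (b i) ≤ a i ∧ a i ≤ max (a i) (b i) ∧ min (a i) (b i) ≤ b i ∧
        b i ≤ max (a i) (b i) := ⟨min_le_left _ _, le_max_left _ _, min_le_right _ _, le_max_right _ _⟩
    rcases hsgn i with ⟨h1, h2, h3⟩|⟨h1, h2, h3⟩|⟨h1, h2, h3⟩ <;>
      simp only [hs, h1] <;> omega
  have hsN : ∀ i, s N i = b i := by
    intro i
    have hni : n i ≤ N := Finset.le_sup (Finset.mem_univ i)
    have hminN : min N (n i) = n i := min_eq_right hni
    simp only [hs, hminN]
    rcases hsgn i with ⟨h1, h2, h3⟩|⟨h1, h2, h3⟩|⟨h1, h2, h3⟩ <;> rw [h1] <;> simp only [hc] at * <;> omega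
  refine ⟨N, fun j i => ρ * (s j i : ℝ), ?_, ?_, ?_, ?_⟩
  · funext i
    show ρ * ((s 0 i : ℤ) : ℝ) = g i
    have h0 : s 0 i = a i := by simp [hs]
    rw [h0, ← ha i]
  · funext i
    show ρ * ((s N i : ℤ) : ℝ) = g' i
    rw [hsN i, ← hb i]
  · intro j
    refine ⟨fun i => ⟨s j i, rfl⟩, ?_⟩
    intro i
    have key := hkey j i
    rw [ha i, hb i]
    constructor
    · show min (ρ * ((a i : ℤ) : ℝ)) (ρ * ((b i : ℤ) : ℝ)) ≤ ρ * ((s j i : ℤ) : ℝ)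
      rw [← mul_min_of_nonneg _ _ hρ.le]
      apply mul_le_mul_of_nonneg_left _ hρ.le
      rw [← Int.cast_min]
      exact_mod_cast key.1
    · show ρ * ((s j i : ℤ) : ℝ) ≤ max (ρ * ((a i : ℤ) : ℝ)) (ρ * ((b i : ℤ) : ℝ))
      rw [← mul_max_of_nonneg _ _ hρ.le]
      apply mul_le_mul_of_nonneg_left _ hρ.le
      rw [← Int.cast_max]
      exact_mod_cast key.2
  · intro j
    rw [dist_pi_le_iff hρ.le]
    intro i
    have hdiff : |s (j+1) i - s j i| ≤ 1 := by
      have h1 : s (j+1) i - s j i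
          = (c i).sign * (((min (j+1) (n i) : ℕ) : ℤ) - ((min j (n i) : ℕ) : ℤ)) := by
        simp only [hs]; ring
      have h4 : min (j+1) (n i) = min j (n i) ∨ min (j+1) (n i) = min j (n i) + 1 := by omega
      rcases h4 with h4|h4
      · rw [h1, h4]
        simp
      · have h5 : ((min j (n i) + 1 : ℕ) : ℤ) - ((min j (n i) : ℕ) : ℤ) = 1 := by
          push_cast; ring
        rw [h1, h4, h5, mul_one]
        rcases hsgn i with ⟨h6, _, _⟩|⟨h6, _, _⟩|⟨h6, _, _⟩ <;> rw [h6] <;> norm_num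
    show dist (ρ * (s (j+1) i : ℝ)) (ρ * (s j i : ℝ)) ≤ ρ
    rw [Real.dist_eq, ← mul_sub, abs_mul, abs_of_pos hρ]
    have h5 : |(s (j+1) i : ℝ) - (s j i : ℝ)| ≤ 1 := by
      have h6 : |((s (j+1) i - s j i : ℤ) : ℝ)| ≤ 1 := by
        rw [← Int.cast_abs]
        exact_mod_cast hdiff
      rwa [Int.cast_sub] at h6
    nlinarith

/-- Rounding to the grid. -/
noncomputable def rnd (d : ℕ) (ρ : ℝ) (p : Fin d → ℝ) : Fin d → ℝ :=
  fun i => ρ * round (p i / ρ)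

theorem rnd_mem_grid (d : ℕ) (ρ : ℝ) (p : Fin d → ℝ) : rnd d ρ p ∈ grid d ρ :=
  fun i => ⟨round (p i / ρ), rfl⟩

theorem dist_rnd_le {d : ℕ} {ρ : ℝ} (hρ : 0 < ρ) (p : Fin d → ℝ) :
    dist (rnd d ρ p) p ≤ ρ / 2 := by
  rw [dist_pi_le_iff (by positivity)]
  intro i
  rw [Real.dist_eq]
  have h1 : rnd d ρ p i - p i = ρ * (round (p i / ρ) - p i / ρ) := by
    field_simp [rnd]
    simp only [rnd, div_eq_mul_inv]
  rw [h1, abs_mul, abs_of_pos hρ]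
  have h2 : |(round (p i / ρ) : ℝ) - p i / ρ| ≤ 1/2 := by
    rw [abs_sub_comm]
    exact abs_sub_round _
  nlinarith

/-- Chain between two grid points near a common center q, staying in the α-ball of q. -/
theorem gchain_between {d : ℕ} {ρ α : ℝ} (hρ : 0 < ρ) (hα : 0 ≤ α)
    {a b q : Fin d → ℝ} (ha : a ∈ grid d ρ) (hb : b ∈ grid d ρ)
    (hqa : dist a q ≤ α) (hqb : dist b q ≤ α) :
    GChain d ρ ({y | dist y q ≤ α} ∩ grid d ρ) a b := by
  obtain ⟨N, p, hp0, hpN, hpm, hpd⟩ := grid_walk hρ ha hb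
  have hmem : ∀ j ≤ N, p j ∈ {y | dist y q ≤ α} ∩ grid d ρ := by
    intro j _
    refine ⟨?_, (hpm j).1⟩
    show dist (p j) q ≤ α
    rw [dist_pi_le_iff hα]
    intro i
    rw [Real.dist_eq]
    have h1 := (hpm j).2 i
    have h2 : |p j i - q i| ≤ max |a i - q i| |b i - q i| :=
      abs_le_max_of_between h1.1 h1.2
    have h3 : |a i - q i| ≤ α := by
      rw [← Real.dist_eq]; exact le_trans (dist_le_pi_dist a q i) hqa
    have h4 : |b i - q i| ≤ α := by
      rw [← Real.dist_eq]; exact le_trans (dist_le_pi_dist b q i) hqb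
    exact le_trans h2 (max_le h3 h4)
  rw [← hp0, ← hpN]
  exact gchain_of_walk hρ (fun y hy => hy.2) p N hmem (fun j _ => hpd j)

/-- One-dimensional crossing lemma. -/
theorem oneD_aux {ρ α u v : ℝ} (hρ : 0 < ρ) (h2 : ρ ≤ 2*α) (huv : |u - v| ≤ 2*α)
    (hle : u ≤ v) :
    ∃ k k' : ℤ, |ρ*k - u| ≤ α ∧ |ρ*k' - v| ≤ α ∧ |k' - k| ≤ 1 := by
  have hα : 0 < α := by linarith
  set k : ℤ := ⌊(u + α)/ρ⌋ with hk
  have hfl : ρ * k ≤ u + α := by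
    rw [hk]
    calc ρ * (⌊(u + α)/ρ⌋ : ℝ) ≤ ρ * ((u + α)/ρ) :=
          mul_le_mul_of_nonneg_left (Int.floor_le _) hρ.le
    _ = u + α := by field_simp
  have hfl2 : u + α - ρ < ρ * k := by
    rw [hk]
    have h5 : (u + α)/ρ - 1 < (⌊(u + α)/ρ⌋ : ℝ) := Int.sub_one_lt_floor _
    have := mul_lt_mul_of_pos_left h5 hρ
    calc u + α - ρ = ρ * ((u + α)/ρ - 1) := by field_simp
    _ < ρ * (⌊(u + α)/ρ⌋ : ℝ) := this
  have hku : |ρ*k - u| ≤ α := by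
    rw [abs_le]
    constructor <;> nlinarith
  by_cases hcase : |ρ*k - v| ≤ α
  · exact ⟨k, k, hku, hcase, by simp⟩
  · have hvu : v - u ≤ 2*α := by
      rw [abs_le] at huv; linarith [huv.1]
    have hlow : ρ*k < v - α := by
      rcases le_or_gt (v - α) (ρ*k) with h|h
      · exfalso
        apply hcase
        rw [abs_le]
        exact ⟨by linarith, by linarith⟩
      · exact h
    refine ⟨k, k + 1, hku, ?_, by simp⟩
    rw [abs_le]
    push_cast
    constructor <;> nlinarith

theorem oneD {ρ α u v : ℝ} (hρ : 0 < ρ) (h2 : ρ ≤ 2*α) (huv : |u - v| ≤ 2*α) :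
    ∃ k k' : ℤ, |ρ*k - u| ≤ α ∧ |ρ*k' - v| ≤ α ∧ |k' - k| ≤ 1 := by
  rcases le_total u v with h|h
  · exact oneD_aux hρ h2 huv h
  · obtain ⟨k, k', h1, h2', h3⟩ := oneD_aux hρ h2 (by rwa [abs_sub_comm]) h
    exact ⟨k', k, h2', h1, by rw [abs_sub_comm]; exact h3⟩


theorem rnd_step {d : ℕ} {ρ : ℝ} (hρ : 0 < ρ) {u v : Fin d → ℝ} (huv : dist u v ≤ ρ/2) :
    dist (rnd d ρ u) (rnd d ρ v) ≤ ρ := by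
  apply grid_dist_le hρ (rnd_mem_grid d ρ u) (rnd_mem_grid d ρ v)
  have t1 := dist_triangle (rnd d ρ u) u (rnd d ρ v)
  have t2 := dist_triangle u v (rnd d ρ v)
  have e1 := dist_rnd_le hρ u
  have e2 := dist_rnd_le hρ v
  have e3 : dist v (rnd d ρ v) = dist (rnd d ρ v) v := dist_comm _ _
  linarith

set_option maxHeartbeats 1000000 in
/-- Chain-connectedness inside a single discretized Euler cell. -/
theorem chainA {d : ℕ} {ρ α h : ℝ} (hρ : 0 < ρ) (hρα : ρ ≤ 2*α)
    {F : (Fin d → ℝ) → Set (Fin d → ℝ)} {x : Fin d → ℝ} (hconv : Convex ℝ (F x))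
    {a b : Fin d → ℝ}
    (ha : a ∈ {y | ∃ w ∈ F x, dist y (x + h • w) ≤ α} ∩ grid d ρ)
    (hb : b ∈ {y | ∃ w ∈ F x, dist y (x + h • w) ≤ α} ∩ grid d ρ) :
    GChain d ρ ({y | ∃ w ∈ F x, dist y (x + h • w) ≤ α} ∩ grid d ρ) a b := by
  have hα : 0 < α := by linarith
  set P := {y | ∃ w ∈ F x, dist y (x + h • w) ≤ α} ∩ grid d ρ with hP
  obtain ⟨⟨w₁, hw₁, hda⟩, hag⟩ := ha
  obtain ⟨⟨w₂, hw₂, hdb⟩, hbg⟩ := hb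
  set q : Fin d → ℝ := x + h • w₁ with hq
  set q' : Fin d → ℝ := x + h • w₂ with hq'
  have hsub1 : {y | dist y q ≤ α} ∩ grid d ρ ⊆ P := by
    intro y hy
    exact ⟨⟨w₁, hw₁, hy.1⟩, hy.2⟩
  have hsub2 : {y | dist y q' ≤ α} ∩ grid d ρ ⊆ P := by
    intro y hy
    exact ⟨⟨w₂, hw₂, hy.1⟩, hy.2⟩
  have hrq : dist (rnd d ρ q) q ≤ α := le_trans (dist_rnd_le hρ q) (by linarith)
  have hrq' : dist (rnd d ρ q') q' ≤ α := le_trans (dist_rnd_le hρ q') (by linarith)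
  -- chain from a to rnd q
  have c1 : GChain d ρ P a (rnd d ρ q) :=
    gchain_mono hsub1 (gchain_between hρ hα.le hag (rnd_mem_grid d ρ q) hda hrq)
  -- chain from rnd q' to b
  have c3 : GChain d ρ P (rnd d ρ q') b :=
    gchain_mono hsub2 (gchain_between hρ hα.le (rnd_mem_grid d ρ q') hbg hrq' hdb)
  -- middle: segment walk
  set N : ℕ := ⌈2 * dist q q' / ρ⌉₊ + 1 with hN
  have hN0 : 0 < N := Nat.succ_pos _
  have hNd : dist q q' / N ≤ ρ / 2 := by
    have h1 : 2 * dist q q' / ρ ≤ (N : ℝ) := by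
      calc 2 * dist q q' / ρ ≤ (⌈2 * dist q q' / ρ⌉₊ : ℝ) := Nat.le_ceil _
      _ ≤ (N : ℝ) := by rw [hN]; push_cast; linarith
    rw [div_le_iff₀ (by exact_mod_cast hN0)]
    rw [div_le_iff₀ hρ] at h1
    nlinarith
  set p : ℕ → (Fin d → ℝ) := fun j => rnd d ρ (q + ((j : ℝ)/(N : ℝ)) • (q' - q)) with hp
  have hc : ∀ j : ℕ, j ≤ N → (q + ((j : ℝ)/(N : ℝ)) • (q' - q)) =
      x + h • ((1 - (j : ℝ)/(N : ℝ)) • w₁ + ((j : ℝ)/(N : ℝ)) • w₂) := by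
    intro j _
    rw [hq, hq']
    module
  have hmem : ∀ j ≤ N, p j ∈ P := by
    intro j hj
    have ht0 : (0:ℝ) ≤ (j : ℝ)/(N : ℝ) := by positivity
    have ht1 : (j : ℝ)/(N : ℝ) ≤ 1 := by
      rw [div_le_one (by exact_mod_cast hN0)]
      exact_mod_cast hj
    have hwt : (1 - (j : ℝ)/(N : ℝ)) • w₁ + ((j : ℝ)/(N : ℝ)) • w₂ ∈ F x :=
      hconv hw₁ hw₂ (by linarith) ht0 (by ring)
    refine ⟨⟨_, hwt, ?_⟩, rnd_mem_grid d ρ _⟩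
    rw [← hc j hj]
    exact le_trans (dist_rnd_le hρ _) (by linarith)
  have hNne : (N:ℝ) ≠ 0 := by
    have : (0:ℝ) < (N:ℝ) := by exact_mod_cast hN0
    exact this.ne'
  have hstep : ∀ j, j < N → dist (p (j+1)) (p j) ≤ ρ := by
    intro j hj
    rw [hp]
    apply rnd_step hρ
    rw [dist_eq_norm]
    have hd1 : (q + (((j+1:ℕ):ℝ)/(N:ℝ)) • (q' - q)) - (q + ((j:ℝ)/(N:ℝ)) • (q' - q))
        = ((1:ℝ)/(N:ℝ)) • (q' - q) := by
      have hc1 : ((j+1:ℕ):ℝ) = (j:ℝ)+1 := by push_cast; ring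
      rw [hc1, show ((j:ℝ)+1)/(N:ℝ) = (j:ℝ)/(N:ℝ) + 1/(N:ℝ) from by field_simp]
      module
    rw [hd1, norm_smul, Real.norm_eq_abs,
      abs_of_nonneg (by positivity : (0:ℝ) ≤ (1:ℝ)/(N:ℝ)), ← dist_eq_norm, dist_comm q' q]
    calc 1/(N:ℝ) * dist q q' = dist q q' / N := by ring
    _ ≤ ρ/2 := hNd
  have c2 : GChain d ρ P (p 0) (p N) :=
    gchain_of_walk hρ (fun y hy => hy.2) p N hmem hstep
  have hp0 : p 0 = rnd d ρ q := by
    rw [hp]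
    simp
  have hpN : p N = rnd d ρ q' := by
    rw [hp]
    simp only [div_self hNne, one_smul]
    rw [add_sub_cancel]
  rw [hp0, hpN] at c2
  exact gchain_trans c1 (gchain_trans c2 c3)

/-- Crossing between two adjacent Euler cells. -/
theorem crossing {d : ℕ} {L h ρ α : ℝ} (hL : 0 ≤ L) (hh : 0 < h) (hρ : 0 < ρ)
    {F : (Fin d → ℝ) → Set (Fin d → ℝ)}
    (hFne : ∀ x, (F x).Nonempty) (hFcpt : ∀ x, IsCompact (F x))
    (hFlip : ∀ x y, Metric.hausdorffDist (F x) (F y) ≤ L * dist x y)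
    (hα : (1 + L*h) * ρ / 2 ≤ α)
    {x x' : Fin d → ℝ} (hdist : dist x x' = ρ) :
    ∃ g g', g ∈ {y | ∃ w ∈ F x, dist y (x + h • w) ≤ α} ∩ grid d ρ ∧
      g' ∈ {y | ∃ w ∈ F x', dist y (x' + h • w) ≤ α} ∩ grid d ρ ∧
      GChain d ρ (({y | ∃ w ∈ F x, dist y (x + h • w) ≤ α} ∩ grid d ρ) ∪
        ({y | ∃ w ∈ F x', dist y (x' + h • w) ≤ α} ∩ grid d ρ)) g g' := by
  have hLh : 0 ≤ L * h := mul_nonneg hL hh.le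
  have hα0 : 0 < α := by nlinarith
  have hρ2α : ρ ≤ 2*α := by nlinarith
  obtain ⟨w, hw⟩ := hFne x
  have hedist : EMetric.hausdorffEdist (F x) (F x') ≠ ⊤ :=
    Metric.hausdorffEdist_ne_top_of_nonempty_of_bounded (hFne x) (hFne x')
      (hFcpt x).isBounded (hFcpt x').isBounded
  obtain ⟨w', hw', hww'⟩ := (hFcpt x').exists_infDist_eq_dist (hFne x') w
  have hdw : dist w w' ≤ L * ρ := by
    rw [← hww']
    calc Metric.infDist w (F x') ≤ Metric.hausdorffDist (F x) (F x') :=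
          Metric.infDist_le_hausdorffDist_of_mem hw hedist
    _ ≤ L * dist x x' := hFlip x x'
    _ = L * ρ := by rw [hdist]
  set u : Fin d → ℝ := x + h • w with hu
  set v : Fin d → ℝ := x' + h • w' with hv
  have hbound : ∀ i, |u i - v i| ≤ 2*α := by
    intro i
    have h1 : |x i - x' i| ≤ ρ := by
      rw [← Real.dist_eq, ← hdist]
      exact dist_le_pi_dist x x' i
    have h2 : |w i - w' i| ≤ L * ρ := by
      rw [← Real.dist_eq]
      exact le_trans (dist_le_pi_dist w w' i) hdw
    have h3 : u i - v i = (x i - x' i) + h * (w i - w' i) := by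
      simp only [hu, hv, Pi.add_apply, Pi.smul_apply, smul_eq_mul]
      ring
    calc |u i - v i| ≤ |x i - x' i| + |h * (w i - w' i)| := by
          rw [h3]; exact abs_add_le _ _
    _ ≤ ρ + h * (L * ρ) := by
          rw [abs_mul, abs_of_pos hh]
          have : |w i - w' i| ≥ 0 := abs_nonneg _
          nlinarith
    _ ≤ 2*α := by nlinarith
  choose k k' h1 h2 h3 using fun i => oneD hρ hρ2α (hbound i)
  set g : Fin d → ℝ := fun i => ρ * k i with hg
  set g' : Fin d → ℝ := fun i => ρ * k' i with hg'
  have hgG : g ∈ grid d ρ := fun i => ⟨k i, rfl⟩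
  have hg'G : g' ∈ grid d ρ := fun i => ⟨k' i, rfl⟩
  have hgu : dist g u ≤ α := by
    rw [dist_pi_le_iff hα0.le]
    intro i
    rw [Real.dist_eq]
    exact h1 i
  have hg'v : dist g' v ≤ α := by
    rw [dist_pi_le_iff hα0.le]
    intro i
    rw [Real.dist_eq]
    exact h2 i
  have hgmem : g ∈ {y | ∃ w ∈ F x, dist y (x + h • w) ≤ α} ∩ grid d ρ :=
    ⟨⟨w, hw, hgu⟩, hgG⟩
  have hg'mem : g' ∈ {y | ∃ w ∈ F x', dist y (x' + h • w) ≤ α} ∩ grid d ρ :=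
    ⟨⟨w', hw', hg'v⟩, hg'G⟩
  refine ⟨g, g', hgmem, hg'mem, ?_⟩
  have hgg' : dist g g' ≤ ρ := by
    rw [dist_pi_le_iff hρ.le]
    intro i
    rw [Real.dist_eq]
    have : g i - g' i = ρ * ((k i : ℝ) - (k' i : ℝ)) := by
      simp only [hg, hg']; ring
    rw [this, abs_mul, abs_of_pos hρ]
    have : |(k i : ℝ) - (k' i : ℝ)| ≤ 1 := by
      have := h3 i
      have hcast : |((k' i - k i : ℤ) : ℝ)| ≤ 1 := by
        rw [← Int.cast_abs]; exact_mod_cast this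
      rw [Int.cast_sub] at hcast
      rwa [abs_sub_comm]
    nlinarith
  by_cases he : g = g'
  · rw [← he]
    exact gchain_refl (Or.inl hgmem)
  · exact gchain_single (Or.inl hgmem) (Or.inr hg'mem)
      (by rw [dist_comm]; exact grid_dist_eq hρ hgG hg'G he hgg')

theorem euler_step_preserves_chainConnected (d : ℕ) (L h ρ α : ℝ)
    (hL : 0 ≤ L) (hh : 0 < h) (hρ : 0 < ρ)
    (F : (Fin d → ℝ) → Set (Fin d → ℝ))
    (hFne : ∀ x, (F x).Nonempty) (hFcpt : ∀ x, IsCompact (F x))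
    (hFconv : ∀ x, Convex ℝ (F x))
    (hFlip : ∀ x y, Metric.hausdorffDist (F x) (F y) ≤ L * dist x y)
    (hα : (1 + L*h) * ρ / 2 ≤ α)
    (M : Set (Fin d → ℝ)) (hM : M ⊆ grid d ρ) (hMne : M.Nonempty)
    (hMcc : ChainConnected d ρ M) :
    (eulerImage d F h ρ α M).Nonempty ∧ ChainConnected d ρ (eulerImage d F h ρ α M) := by
  have hLh : 0 ≤ L * h := mul_nonneg hL hh.le
  have hα0 : 0 < α := by nlinarith
  have hρ2α : ρ ≤ 2*α := by nlinarith
  have hsub : ∀ x ∈ M,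
      ({y | ∃ w ∈ F x, dist y (x + h • w) ≤ α} ∩ grid d ρ) ⊆ eulerImage d F h ρ α M := by
    intro x hx y hy
    exact Set.mem_biUnion hx hy
  have hne : ∀ x : Fin d → ℝ,
      ({y | ∃ w ∈ F x, dist y (x + h • w) ≤ α} ∩ grid d ρ).Nonempty := by
    intro x
    obtain ⟨w, hw⟩ := hFne x
    refine ⟨rnd d ρ (x + h • w), ⟨w, hw, ?_⟩, rnd_mem_grid d ρ _⟩
    exact le_trans (dist_rnd_le hρ _) (by linarith)
  constructor
  · obtain ⟨x₀, hx₀⟩ := hMne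
    obtain ⟨g, hg⟩ := hne x₀
    exact ⟨g, hsub x₀ hx₀ hg⟩
  · intro a ha b hb
    obtain ⟨x₀, hx₀, ha'⟩ := Set.mem_iUnion₂.mp ha
    obtain ⟨z₀, hz₀, hb'⟩ := Set.mem_iUnion₂.mp hb
    obtain ⟨n, c, hc0, hcn, hcm, hcd⟩ := hMcc x₀ hx₀ z₀ hz₀
    have key : ∀ k, k ≤ n → ∀ p ∈ ({y | ∃ w ∈ F (c k), dist y (c k + h • w) ≤ α} ∩ grid d ρ),
        GChain d ρ (eulerImage d F h ρ α M) a p := by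
      intro k
      induction k with
      | zero =>
        intro _ p hp
        rw [hc0] at hp
        apply gchain_mono (hsub x₀ hx₀)
        exact chainA hρ hρ2α (hFconv x₀) ha' hp
      | succ k ih =>
        intro hk p hp
        have hdk : dist (c k) (c (k+1)) = ρ := by
          rw [dist_comm]; exact hcd k (by omega)
        obtain ⟨g, g', hgm, hg'm, hchain⟩ :=
          crossing hL hh hρ hFne hFcpt hFlip hα hdk
        have hksub : ({y | ∃ w ∈ F (c k), dist y (c k + h • w) ≤ α} ∩ grid d ρ) ∪
            ({y | ∃ w ∈ F (c (k+1)), dist y (c (k+1) + h • w) ≤ α} ∩ grid d ρ)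
            ⊆ eulerImage d F h ρ α M :=
          Set.union_subset (hsub (c k) (hcm k (by omega))) (hsub (c (k+1)) (hcm (k+1) hk))
        have c1 := ih (by omega) g hgm
        have c2 := gchain_mono hksub hchain
        have c3 := gchain_mono (hsub (c (k+1)) (hcm (k+1) hk))
          (chainA hρ hρ2α (hFconv (c (k+1))) hg'm hp)
        exact gchain_trans c1 (gchain_trans c2 c3)
    have hfinal := key n le_rfl b (by rw [hcn]; exact hb')
    exact hfinal
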